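/- Let k ≥ 1 and let a₀, a₁, a₂, a₃ ∈ 𝔽_{2^k} with a₀ ≠ 0. Define g : 𝔽_{2^k} × 𝔽_{2^k} → 𝔽₂ by g(x, y) = Tr(a₀·x·y + a₁·x + a₂·y + a₃). Then all Fourier coefficients of g have the same absolute value; that is, for all μ₁, μ₂ ∈ 𝔽_{2^k}, |Σ_{x,y∈𝔽_{2^k}} (−1)^{g(x,y) + Tr(μ₁·x + μ₂·y)}| = |Σ_{x,y∈𝔽_{2^k}} (−1)^{g(x,y)}|. -/

import Mathlib

open scoped Classical

section aux
variable {F : Type*} [Field F] [Fintype F] [Algebra (ZMod 2) F]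

noncomputable def chi (F : Type*) [Field F] [Fintype F] [Algebra (ZMod 2) F] (c : F) : ℝ :=
  (-1 : ℝ) ^ (Algebra.trace (ZMod 2) F c).val

lemma neg_one_pow_add (a b : ZMod 2) :
    (-1 : ℝ) ^ (a + b).val = (-1 : ℝ) ^ a.val * (-1 : ℝ) ^ b.val := by
  rw [ZMod.val_add, ← pow_add]
  exact (neg_one_pow_eq_pow_mod_two (R := ℝ) _).symm

lemma chi_add (a b : F) : chi F (a + b) = chi F a * chi F b := by
  unfold chi
  rw [map_add, neg_one_pow_add]

lemma abs_chi (a : F) : |chi F a| = 1 := by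
  simp [chi, abs_pow]

instance : FiniteDimensional (ZMod 2) F := Module.Finite.of_finite
instance : Algebra.IsSeparable (ZMod 2) F := by infer_instance

lemma chi_sum_eq_zero : ∑ z : F, chi F z = 0 := by
  obtain ⟨z0, hz0⟩ := Algebra.trace_surjective (ZMod 2) F 1
  have h := Fintype.sum_equiv (Equiv.addLeft z0) (fun z => chi F (z0 + z)) (fun z => chi F z)
    (fun z => rfl)
  have h2 : ∀ z : F, chi F (z0 + z) = - chi F z := by
    intro z
    rw [chi_add]
    unfold chi
    rw [hz0]
    norm_num [ZMod.val_one]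
  simp only [h2, Finset.sum_neg_distrib] at h
  linarith [h]

lemma chi_mul_sum (c : F) :
    ∑ y : F, chi F (c * y) = if c = 0 then (Fintype.card F : ℝ) else 0 := by
  split_ifs with hc
  · simp [hc, chi, Finset.card_univ]
  · have h := Fintype.sum_equiv (Equiv.mulLeft₀ c hc) (fun y => chi F (c * y)) (fun y => chi F y)
      (fun y => rfl)
    rw [h, chi_sum_eq_zero]

lemma key (a0 a1 a2 a3 : F) (ha0 : a0 ≠ 0) :
    |∑ x : F, ∑ y : F, chi F (a0 * x * y + a1 * x + a2 * y + a3)| = Fintype.card F := by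
  haveI : CharP F 2 := charP_of_injective_algebraMap (algebraMap (ZMod 2) F).injective 2
  have h2 : (2 : F) = 0 := by
    have := CharP.cast_eq_zero F 2
    exact_mod_cast this
  have hinner : ∀ x : F, ∑ y : F, chi F (a0 * x * y + a1 * x + a2 * y + a3)
      = chi F (a1 * x + a3) * (if a0 * x + a2 = 0 then (Fintype.card F : ℝ) else 0) := by
    intro x
    rw [← chi_mul_sum (a0 * x + a2), Finset.mul_sum]
    refine Finset.sum_congr rfl fun y _ => ?_
    rw [← chi_add]
    ring_nf
  simp only [hinner]
  set x0 : F := a2 / a0 with hx0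
  rw [Finset.sum_eq_single x0]
  · have hz : a0 * x0 + a2 = 0 := by
      rw [hx0, mul_div_cancel₀ _ ha0]
      rw [← two_mul, h2, zero_mul]
    rw [if_pos hz, abs_mul, abs_chi, one_mul, Nat.abs_cast]
  · intro x _ hx
    rw [if_neg, mul_zero]
    intro h
    apply hx
    rw [hx0, eq_div_iff ha0]
    linear_combination h - a2 * h2
  · intro h; exact absurd (Finset.mem_univ x0) h
end aux

/-- Let `F = 𝔽_{2^k}` (with `k ≥ 1`) and `a₀, a₁, a₂, a₃ ∈ F` with `a₀ ≠ 0`.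
Define `g(x, y) = Tr(a₀·x·y + a₁·x + a₂·y + a₃)`, where `Tr : F → 𝔽₂` is the field
trace. Then all Fourier coefficients of `g` have the same absolute value: for all
`μ₁, μ₂ ∈ F`,
`|∑_{x,y} (-1)^{g(x,y) + Tr(μ₁·x + μ₂·y)}| = |∑_{x,y} (-1)^{g(x,y)}|`. -/
theorem trace_bent {k : ℕ} (hk : 1 ≤ k) {F : Type*} [Field F] [Fintype F]
    [Algebra (ZMod 2) F] (hF : Fintype.card F = 2 ^ k)
    (a0 a1 a2 a3 : F) (ha0 : a0 ≠ 0) (μ1 μ2 : F) :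
    |∑ x : F, ∑ y : F,
        (-1 : ℝ) ^ (Algebra.trace (ZMod 2) F (a0 * x * y + a1 * x + a2 * y + a3)
          + Algebra.trace (ZMod 2) F (μ1 * x + μ2 * y)).val| =
    |∑ x : F, ∑ y : F,
        (-1 : ℝ) ^ (Algebra.trace (ZMod 2) F (a0 * x * y + a1 * x + a2 * y + a3)).val| := by
  have hL : ∀ x y : F,
      (-1 : ℝ) ^ (Algebra.trace (ZMod 2) F (a0 * x * y + a1 * x + a2 * y + a3)
          + Algebra.trace (ZMod 2) F (μ1 * x + μ2 * y)).val
      = chi F (a0 * x * y + (a1 + μ1) * x + (a2 + μ2) * y + a3) := by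
    intro x y
    rw [← map_add]
    show chi F _ = chi F _
    congr 1
    ring
  simp only [hL]
  show _ = |∑ x : F, ∑ y : F, chi F (a0 * x * y + a1 * x + a2 * y + a3)|
  rw [key a0 (a1 + μ1) (a2 + μ2) a3 ha0, key a0 a1 a2 a3 ha0]
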